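/- Let Σ = X(S¹) be an embedded, closed, smooth plane curve and suppose the function (p,q) ↦ d(p,q)/ψ(p,q) attains a local minimum at a pair (p,q) with p ≠ q and l(p,q) ≤ L/2. Then the first-derivative conditions force ⟨w, τ_p⟩ = ⟨w, τ_q⟩ = (d/ψ)(p,q) · cos(π l(p,q)/L). In particular, if additionally (d/ψ)(p,q) < 1, then ⟨w, τ_p⟩ = ⟨w, τ_q⟩ = cos(β/2) for some β ∈ (0, π], where cos(β/2) ∈ [0,1). -/

import Mathlib

open Real Set MeasureTheory

noncomputable section

/-- The Euclidean plane. -/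
abbrev E2 : Type := EuclideanSpace ℝ (Fin 2)

/-- Rotation by minus 90 degrees: `(a, b) ↦ (b, -a)`. -/
def rot90 (u : E2) : E2 := WithLp.toLp 2 ![u 1, -u 0]

/-- Length element `v(p) = ‖∂X/∂p‖`. -/
def lenElem (X : ℝ → E2) (p : ℝ) : ℝ := ‖deriv X p‖

/-- Unit tangent vector `τ = v⁻¹ ∂X/∂p`. -/
def tvec (X : ℝ → E2) (p : ℝ) : E2 := (lenElem X p)⁻¹ • deriv X p

/-- Outward unit normal `ν = (τ₂, -τ₁)`. -/
def nvec (X : ℝ → E2) (p : ℝ) : E2 := rot90 (tvec X p)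

/-- Curvature `κ = -⟨∂τ/∂s, ν⟩`, where `∂/∂s = v⁻¹ ∂/∂p` is the arc-length derivative. -/
def curv (X : ℝ → E2) (p : ℝ) : ℝ :=
  -(inner ℝ ((lenElem X p)⁻¹ • deriv (tvec X) p) (nvec X p) : ℝ)

/-- Curvature vector `κ⃗ = -κ ν`. -/
def kvec (X : ℝ → E2) (p : ℝ) : E2 := (-(curv X p)) • nvec X p

/-- Local total curvature `θ(p,q) = ∫_p^q κ ds`. -/
def theta (X : ℝ → E2) (p q : ℝ) : ℝ := ∫ r in p..q, curv X r * lenElem X r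

/-- Intrinsic (arc-length) distance `l(p,q) = ∫_p^q ds`. -/
def arcl (X : ℝ → E2) (p q : ℝ) : ℝ := ∫ r in p..q, lenElem X r

/-- `∫_p^q κ² ds`. -/
def sqCurvInt (X : ℝ → E2) (p q : ℝ) : ℝ := ∫ r in p..q, (curv X r)^2 * lenElem X r

/-- Total length `L` of the (1-periodic) curve. -/
def clen (X : ℝ → E2) : ℝ := arcl X 0 1

/-- Extrinsic distance `d(p,q) = ‖X(q) - X(p)‖`. -/
def extd (X : ℝ → E2) (p q : ℝ) : ℝ := ‖X q - X p‖

/-- The unit vector `w = (X(q) - X(p))/d(p,q)`. -/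
def wvec (X : ℝ → E2) (p q : ℝ) : E2 := (extd X p q)⁻¹ • (X q - X p)

/-- `ψ(p,q) = (L/π) sin(π l(p,q)/L)`. -/
def psi (X : ℝ → E2) (p q : ℝ) : ℝ :=
  (clen X / π) * Real.sin (π * arcl X p q / clen X)

/-- A closed smooth regular curve, modelled as a 1-periodic map `ℝ → ℝ²`. -/
def IsClosedCurve (X : ℝ → E2) : Prop :=
  ContDiff ℝ (⊤ : ℕ∞) X ∧ Function.Periodic X 1 ∧ ∀ p, deriv X p ≠ 0

/-- Embeddedness: self-intersections only at parameters differing by a full period. -/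
def IsEmbedded (X : ℝ → E2) : Prop :=
  ∀ p q : ℝ, X p = X q → ∃ k : ℤ, q - p = (k : ℝ)

/-- The set of values of the local total curvature over all pairs of points on the curve. -/
def thetaVals (X : ℝ → E2) : Set ℝ :=
  {x : ℝ | ∃ p q : ℝ, p ≤ q ∧ q ≤ p + 1 ∧ x = theta X p q}

/-- The time-`t` curve of a flow. -/
def curveAt (X : ℝ → ℝ → E2) (t : ℝ) : ℝ → E2 := fun p => X p t

/-- Joint smoothness of a flow of curves. -/
def SmoothFlow (X : ℝ → ℝ → E2) : Prop :=
  ContDiff ℝ (⊤ : ℕ∞) (fun z : ℝ × ℝ => X z.1 z.2)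

/-- The flow equation `∂X/∂t = (h(t) - κ)ν` holding for all times in `S`. -/
def FlowEq (X : ℝ → ℝ → E2) (h : ℝ → ℝ) (S : Set ℝ) : Prop :=
  ∀ p : ℝ, ∀ t ∈ S,
    HasDerivAt (fun s => X p s)
      ((h t - curv (curveAt X t) p) • nvec (curveAt X t) p) t


/-- Derivative of the norm of a curve away from zero. -/
lemma hasDerivAt_norm_aux {Y : ℝ → E2} {Y' : E2} {x : ℝ} (h : HasDerivAt Y Y' x)
    (hne : Y x ≠ 0) :
    HasDerivAt (fun t => ‖Y t‖) ((‖Y x‖)⁻¹ * (inner ℝ (Y x) Y' : ℝ)) x := by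
  have h1 : HasDerivAt (fun t => ‖Y t‖ ^ 2) (2 * (inner ℝ (Y x) Y' : ℝ)) x := h.norm_sq
  have hx0 : (‖Y x‖ : ℝ) ^ 2 ≠ 0 := pow_ne_zero _ (norm_ne_zero_iff.2 hne)
  have h2 := (Real.hasDerivAt_sqrt hx0).comp x h1
  have heq : (fun t => Real.sqrt (‖Y t‖ ^ 2)) = fun t => ‖Y t‖ := by
    funext t; rw [Real.sqrt_sq (norm_nonneg _)]
  rw [Function.comp_def, heq] at h2
  refine h2.congr_deriv ?_
  rw [Real.sqrt_sq (norm_nonneg _)]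
  field_simp

set_option maxHeartbeats 1000000 in
/-- **First-derivative conditions at a spatial minimum of `d/ψ`.**
If `d/ψ` attains a local minimum at `(p,q)` with `p ≠ q` and `l(p,q) ≤ L/2`, then
`⟨w, τ_p⟩ = ⟨w, τ_q⟩ = (d/ψ) cos(π l/L)`; if moreover `d/ψ < 1` at `(p,q)`, then
`⟨w, τ_p⟩ = ⟨w, τ_q⟩ = cos(β/2)` for some `β ∈ (0, π]` with `cos(β/2) ∈ [0,1)`. -/
theorem first_derivative_conditions_at_min
    (X : ℝ → E2) (hcc : IsClosedCurve X) (hemb : IsEmbedded X)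
    (p q : ℝ) (hpq : p < q) (hq : q < p + 1)
    (hl : arcl X p q ≤ clen X / 2)
    (hmin : IsLocalMin (fun z : ℝ × ℝ => extd X z.1 z.2 / psi X z.1 z.2) (p, q)) :
    ((inner ℝ (wvec X p q) (tvec X p) : ℝ)
        = extd X p q / psi X p q * Real.cos (π * arcl X p q / clen X) ∧
      (inner ℝ (wvec X p q) (tvec X q) : ℝ)
        = extd X p q / psi X p q * Real.cos (π * arcl X p q / clen X)) ∧
    (extd X p q / psi X p q < 1 →
      ∃ β ∈ Set.Ioc 0 π,
        (inner ℝ (wvec X p q) (tvec X p) : ℝ) = Real.cos (β / 2) ∧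
        (inner ℝ (wvec X p q) (tvec X q) : ℝ) = Real.cos (β / 2) ∧
        Real.cos (β / 2) ∈ Set.Ico 0 1) := by
  classical
  obtain ⟨hsm, hper, hreg⟩ := hcc
  have h1top : (1 : ℕ∞) ≤ (⊤ : ℕ∞) := le_top
  have hdiff : Differentiable ℝ X := hsm.differentiable (by simp)
  have hvcont : Continuous (lenElem X) :=
    (hsm.continuous_deriv (by exact_mod_cast h1top)).norm
  have hvpos : ∀ r, 0 < lenElem X r := fun r => norm_pos_iff.2 (hreg r)
  have hvint : ∀ a b : ℝ, IntervalIntegrable (lenElem X) volume a b :=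
    fun a b => hvcont.intervalIntegrable a b
  have hmeasv : ∀ r : ℝ, StronglyMeasurableAtFilter (lenElem X) (nhds r) :=
    fun r => hvcont.stronglyMeasurable.stronglyMeasurableAtFilter
  set L := clen X with hLdef
  have hL : 0 < L := intervalIntegral.intervalIntegral_pos_of_pos (hvint 0 1)
    hvpos one_pos
  have hl : 0 < arcl X p q := intervalIntegral.intervalIntegral_pos_of_pos (hvint p q)
    hvpos hpq
  set l := arcl X p q with hldef
  have hlL : l < L := by linarith
  have hπ := Real.pi_pos
  have harg1 : 0 < π * l / L := by positivity
  have harg2 : π * l / L ≤ π / 2 := by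
    rw [div_le_div_iff₀ hL two_pos]
    nlinarith
  have hsin : 0 < Real.sin (π * l / L) :=
    Real.sin_pos_of_pos_of_lt_pi harg1 (by linarith)
  have hcos : 0 ≤ Real.cos (π * l / L) :=
    Real.cos_nonneg_of_mem_Icc ⟨by linarith, harg2⟩
  set C := Real.cos (π * l / L) with hCdef
  have hpsi : 0 < psi X p q := mul_pos (div_pos hL hπ) hsin
  have hXne : X q - X p ≠ 0 := by
    intro h
    obtain ⟨k, hk⟩ := hemb p q (sub_eq_zero.mp h).symm
    have h1 : (0 : ℝ) < (k : ℝ) := by rw [← hk]; linarith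
    have h2 : (k : ℝ) < 1 := by rw [← hk]; linarith
    have h1' : (0 : ℤ) < k := by exact_mod_cast h1
    have h2' : k < 1 := by exact_mod_cast h2
    omega
  have hd : 0 < extd X p q := norm_pos_iff.2 hXne
  set d := extd X p q with hddef
  set ψ := psi X p q with hψdef
  set Iq : ℝ := (inner ℝ (X q - X p) (deriv X q) : ℝ) with hIqdef
  set Ip : ℝ := (inner ℝ (X q - X p) (deriv X p) : ℝ) with hIpdef
  set vq := lenElem X q with hvqdef
  set vp := lenElem X p with hvpdef
  have hvq : 0 < vq := hvpos q
  have hvp : 0 < vp := hvpos p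
  -- derivative computations in q
  have harcq : HasDerivAt (fun x => arcl X p x) vq q :=
    intervalIntegral.integral_hasDerivAt_right (hvint p q) (hmeasv q) hvcont.continuousAt
  have harcp : HasDerivAt (fun x => arcl X x q) (-vp) p :=
    intervalIntegral.integral_hasDerivAt_left (hvint p q) (hmeasv p) hvcont.continuousAt
  have hpsiq : HasDerivAt (fun x => psi X p x) (C * vq) q := by
    have h1 : HasDerivAt (fun x => π * arcl X p x / L) (π * vq / L) q :=
      (harcq.const_mul π).div_const L
    have h2 := (Real.hasDerivAt_sin (π * l / L)).comp q h1
    have h3 := h2.const_mul (L / π)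
    refine h3.congr_deriv ?_
    rw [hCdef]
    field_simp
  have hpsip : HasDerivAt (fun x => psi X x q) (-(C * vp)) p := by
    have h1 : HasDerivAt (fun x => π * arcl X x q / L) (π * (-vp) / L) p :=
      (harcp.const_mul π).div_const L
    have h2 := (Real.hasDerivAt_sin (π * l / L)).comp p h1
    have h3 := h2.const_mul (L / π)
    refine h3.congr_deriv ?_
    rw [hCdef]
    field_simp
  have hdq : HasDerivAt (fun x => extd X p x) (d⁻¹ * Iq) q := by
    have hY : HasDerivAt (fun x => X x - X p) (deriv X q) q :=
      ((hdiff q).hasDerivAt).sub_const _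
    exact hasDerivAt_norm_aux hY hXne
  have hdp : HasDerivAt (fun x => extd X x q) (d⁻¹ * (-Ip)) p := by
    have hY : HasDerivAt (fun x => X q - X x) (-(deriv X p)) p := by
      exact ((hasDerivAt_const p (X q)).sub (hdiff p).hasDerivAt).congr_deriv (zero_sub _)
    have := hasDerivAt_norm_aux hY hXne
    rw [inner_neg_right] at this
    exact this
  -- quotient derivatives
  have hfq : HasDerivAt (fun x => extd X p x / psi X p x)
      ((d⁻¹ * Iq * ψ - d * (C * vq)) / ψ ^ 2) q := hdq.div hpsiq hpsi.ne'
  have hfp : HasDerivAt (fun x => extd X x q / psi X x q)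
      ((d⁻¹ * (-Ip) * ψ - d * (-(C * vp))) / ψ ^ 2) p := hdp.div hpsip hpsi.ne'
  -- local minima along coordinates
  have hminq : IsLocalMin (fun x => extd X p x / psi X p x) q := by
    have hc : ContinuousAt (fun x : ℝ => (p, x)) q :=
      (continuous_const.prodMk continuous_id).continuousAt
    exact hmin.comp_continuous hc
  have hminp : IsLocalMin (fun x => extd X x q / psi X x q) p := by
    have hc : ContinuousAt (fun x : ℝ => (x, q)) p :=
      (continuous_id.prodMk continuous_const).continuousAt
    exact IsLocalMin.comp_continuous (g := fun x : ℝ => (x, q)) hmin hc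
  have h0q := hminq.deriv_eq_zero
  rw [hfq.deriv] at h0q
  have h0p := hminp.deriv_eq_zero
  rw [hfp.deriv] at h0p
  -- numerators vanish
  have hnq : d⁻¹ * Iq * ψ - d * (C * vq) = 0 :=
    (div_eq_zero_iff.mp h0q).resolve_right (pow_ne_zero 2 hpsi.ne')
  have hnp : d⁻¹ * (-Ip) * ψ - d * (-(C * vp)) = 0 :=
    (div_eq_zero_iff.mp h0p).resolve_right (pow_ne_zero 2 hpsi.ne')
  have hIq' : Iq * ψ = d ^ 2 * (C * vq) := by
    have h := hnq
    field_simp [hd.ne'] at h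
    nlinarith [h]
  have hIp' : Ip * ψ = d ^ 2 * (C * vp) := by
    have h := hnp
    field_simp [hd.ne'] at h
    nlinarith [h]
  have hwq : (inner ℝ (wvec X p q) (tvec X q) : ℝ) = d⁻¹ * vq⁻¹ * Iq := by
    rw [hIqdef, hddef, hvqdef]
    unfold wvec tvec
    rw [real_inner_smul_left, real_inner_smul_right]
    ring
  have hwp : (inner ℝ (wvec X p q) (tvec X p) : ℝ) = d⁻¹ * vp⁻¹ * Ip := by
    rw [hIpdef, hddef, hvpdef]
    unfold wvec tvec
    rw [real_inner_smul_left, real_inner_smul_right]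
    ring
  have hC' : Real.cos (π * arcl X p q / clen X) = C := rfl
  have key : (inner ℝ (wvec X p q) (tvec X p) : ℝ)
        = extd X p q / psi X p q * Real.cos (π * arcl X p q / clen X) ∧
      (inner ℝ (wvec X p q) (tvec X q) : ℝ)
        = extd X p q / psi X p q * Real.cos (π * arcl X p q / clen X) := by
    constructor
    · rw [hwp, hC']
      rw [div_mul_eq_mul_div, eq_div_iff hpsi.ne']
      field_simp [hd.ne', hvp.ne']
      nlinarith [hIp']
    · rw [hwq, hC']
      rw [div_mul_eq_mul_div, eq_div_iff hpsi.ne']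
      field_simp [hd.ne', hvq.ne']
      nlinarith [hIq']
  refine ⟨key, fun hlt => ?_⟩
  set c := extd X p q / psi X p q * Real.cos (π * arcl X p q / clen X) with hcdef
  have hc0 : 0 ≤ c := by
    rw [hcdef, hC']
    exact mul_nonneg (le_of_lt (div_pos hd hpsi)) hcos
  have hc1 : c < 1 := by
    rw [hcdef, hC']
    have hcle : C ≤ 1 := Real.cos_le_one _
    have hdp' : 0 < d / ψ := div_pos hd hpsi
    nlinarith
  refine ⟨2 * Real.arccos c, ⟨?_, ?_⟩, ?_, ?_, ?_⟩
  · have := Real.arccos_pos.2 hc1; linarith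
  · have := Real.arccos_le_pi_div_two.2 hc0; linarith
  · rw [show 2 * Real.arccos c / 2 = Real.arccos c by ring,
      Real.cos_arccos (by linarith) (le_of_lt hc1)]
    exact key.1
  · rw [show 2 * Real.arccos c / 2 = Real.arccos c by ring,
      Real.cos_arccos (by linarith) (le_of_lt hc1)]
    exact key.2
  · rw [show 2 * Real.arccos c / 2 = Real.arccos c by ring,
      Real.cos_arccos (by linarith) (le_of_lt hc1)]
    exact ⟨hc0, hc1⟩
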